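/- Hölder increment bound for g (inequality (4.8) in the proof of Proposition 4.6): Let 1 ≤ l ≤ d be integers and p₁ ∈ (0,1). Write points of ℝ^d as (w,x,y) with w ∈ ℝ, x ∈ ℝ^{l−1}, y ∈ ℝ^{d−l}. Let u : ℝ^{d−l} → [0,∞) be continuous, γ ≥ 0, and let L : ℝ^d → ℝ be continuously differentiable with |L(w,x,y)| ≤ u(y) and |∂₁ L(w,x,y)| ≤ (1 + ‖(w,x)‖^{γ}) u(y) for all (w,x,y), where ‖·‖ is the maximum norm. Define g(w,x,y) := |w|^{p₁} L(w,x,y). Then there exist constants K > 0 and h″ ≥ 0 such that for all w, z ∈ ℝ, x ∈ ℝ^{l−1}, y ∈ ℝ^{d−l}: |g(w+z,x,y) − g(w,x,y)| ≤ K u(y) (1 + ‖(w,x)‖^{h″}) |z|^{p₁}. -/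

import Mathlib

def splice3 (d l : ℕ) (hl : 1 ≤ l) (hld : l ≤ d) (w : ℝ)
    (x : Fin (l - 1) → ℝ) (y : Fin (d - l) → ℝ) : Fin d → ℝ :=
  fun j =>
    if h0 : (j : ℕ) = 0 then w
    else if h : (j : ℕ) < l then x ⟨(j : ℕ) - 1, by omega⟩
    else y ⟨(j : ℕ) - l, by have := j.isLt; omega⟩

lemma myrpow_add (a b p : ℝ) (ha : 0 ≤ a) (hb : 0 ≤ b) (hp : 0 ≤ p) (hp1 : p ≤ 1) :
    (a + b) ^ p ≤ a ^ p + b ^ p := by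
  lift a to NNReal using ha
  lift b to NNReal using hb
  rw [← NNReal.coe_add, ← NNReal.coe_rpow, ← NNReal.coe_rpow, ← NNReal.coe_rpow,
    ← NNReal.coe_add]
  exact_mod_cast NNReal.rpow_add_le_add_rpow a b hp hp1

lemma myrpow_diff (a b p : ℝ) (hp : 0 ≤ p) (hp1 : p ≤ 1) :
    |(|a| ^ p - |b| ^ p)| ≤ |a - b| ^ p := by
  have key : ∀ s t : ℝ, |s| ^ p - |t| ^ p ≤ |s - t| ^ p := by
    intro s t
    have h1 : |s| ≤ |s - t| + |t| := by
      calc |s| = |s - t + t| := by ring_nf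
      _ ≤ |s - t| + |t| := abs_add_le _ _
    have h2 : |s| ^ p ≤ (|s - t| + |t|) ^ p :=
      Real.rpow_le_rpow (abs_nonneg _) h1 hp
    have h3 := myrpow_add |s - t| |t| p (abs_nonneg _) (abs_nonneg _) hp hp1
    linarith
  rw [abs_sub_le_iff]
  constructor
  · exact key a b
  · have := key b a
    rwa [show |b - a| = |a - b| from abs_sub_comm b a] at this

lemma splice_affine (d l : ℕ) (hl : 1 ≤ l) (hld : l ≤ d) (hd : 0 < d)
    (x : Fin (l - 1) → ℝ) (y : Fin (d - l) → ℝ) (t : ℝ) :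
    splice3 d l hl hld t x y =
      splice3 d l hl hld 0 x y + t • (Pi.single (⟨0, hd⟩ : Fin d) 1 : Fin d → ℝ) := by
  funext j
  simp only [splice3, Pi.add_apply, Pi.smul_apply, smul_eq_mul]
  by_cases h0 : (j : ℕ) = 0
  · have hj : j = (⟨0, hd⟩ : Fin d) := Fin.ext h0
    rw [hj]
    simp
  · have hj : j ≠ (⟨0, hd⟩ : Fin d) := fun h => h0 (by rw [h])
    rw [Pi.single_eq_of_ne hj]
    simp [h0]

lemma deriv_along (d l : ℕ) (hl : 1 ≤ l) (hld : l ≤ d) (hd : 0 < d)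
    (L : (Fin d → ℝ) → ℝ) (hL : ContDiff ℝ 1 L)
    (x : Fin (l - 1) → ℝ) (y : Fin (d - l) → ℝ) (t : ℝ) :
    HasDerivAt (fun s => L (splice3 d l hl hld s x y))
      (fderiv ℝ L (splice3 d l hl hld t x y) (Pi.single (⟨0, hd⟩ : Fin d) 1)) t := by
  set e : Fin d → ℝ := Pi.single (⟨0, hd⟩ : Fin d) 1 with he
  set c : Fin d → ℝ := splice3 d l hl hld 0 x y with hc
  have h1 : HasDerivAt (fun s : ℝ => c + s • e) e t := by
    simpa using ((hasDerivAt_id t).smul_const e).const_add c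
  have h2 := (hL.differentiable one_ne_zero (c + t • e)).hasFDerivAt
  have h3 := h2.comp_hasDerivAt t h1
  have hsp : ∀ s : ℝ, splice3 d l hl hld s x y = c + s • e :=
    fun s => splice_affine d l hl hld hd x y s
  simpa [← hsp, Function.comp_def] using h3

lemma M_le (M γ : ℝ) (hM : 0 ≤ M) (hγ : 0 ≤ γ) : M ≤ 1 + M ^ (γ + 1) := by
  rcases le_total M 1 with h | h
  · have : (0:ℝ) ≤ M ^ (γ + 1) := Real.rpow_nonneg hM _
    linarith
  · have h1 : M ^ (1:ℝ) ≤ M ^ (γ + 1) :=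
      Real.rpow_le_rpow_of_exponent_le h (by linarith)
    rw [Real.rpow_one] at h1
    linarith

set_option maxHeartbeats 1000000 in
/-- **Hölder increment bound for `g` (inequality (4.8) in the proof of Proposition 4.6)**:
for `g(w,x,y) = |w|^{p₁} L(w,x,y)` with `|L| ≤ u(y)` and `|∂₁L| ≤ (1+‖(w,x)‖^γ)u(y)`,
there are `K > 0` and `h'' ≥ 0` such that
`|g(w+z,x,y) − g(w,x,y)| ≤ K u(y) (1 + ‖(w,x)‖^{h''}) |z|^{p₁}` for all `w, z, x, y`,
where `‖(w,x)‖ = max |w| ‖x‖` is the maximum norm. -/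
theorem stmt12 (d l : ℕ) (hl : 1 ≤ l) (hld : l ≤ d)
    (p₁ : ℝ) (hp₁ : p₁ ∈ Set.Ioo (0:ℝ) 1)
    (u : (Fin (d - l) → ℝ) → ℝ) (hu_cont : Continuous u) (hu_nonneg : ∀ y, 0 ≤ u y)
    (γ : ℝ) (hγ : 0 ≤ γ)
    (L : (Fin d → ℝ) → ℝ) (hL : ContDiff ℝ 1 L)
    (hLbound : ∀ (w : ℝ) (x : Fin (l - 1) → ℝ) (y : Fin (d - l) → ℝ),
      |L (splice3 d l hl hld w x y)| ≤ u y)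
    (hDbound : ∀ (w : ℝ) (x : Fin (l - 1) → ℝ) (y : Fin (d - l) → ℝ),
      |fderiv ℝ L (splice3 d l hl hld w x y) (Pi.single (⟨0, by omega⟩ : Fin d) 1)| ≤
        (1 + (max |w| ‖x‖) ^ γ) * u y) :
    ∃ K h'' : ℝ, 0 < K ∧ 0 ≤ h'' ∧
      ∀ (w z : ℝ) (x : Fin (l - 1) → ℝ) (y : Fin (d - l) → ℝ),
        abs (|w + z| ^ p₁ * L (splice3 d l hl hld (w + z) x y) -
          |w| ^ p₁ * L (splice3 d l hl hld w x y)) ≤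
        K * u y * (1 + (max |w| ‖x‖) ^ h'') * |z| ^ p₁ := by
  obtain ⟨hp0, hp1⟩ := hp₁
  have hd : 0 < d := by omega
  refine ⟨3 * (1 + (2:ℝ) ^ γ), γ + 1, by positivity, by linarith, ?_⟩
  intro w z x y
  set M := max |w| ‖x‖ with hM
  have hM0 : 0 ≤ M := le_trans (abs_nonneg w) (le_max_left _ _)
  have huy := hu_nonneg y
  set A := L (splice3 d l hl hld (w + z) x y) with hA
  set B := L (splice3 d l hl hld w x y) with hB
  have hAb : |A| ≤ u y := hLbound _ _ _
  have hBb : |B| ≤ u y := hLbound _ _ _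
  have hzp : (0:ℝ) ≤ |z| ^ p₁ := Real.rpow_nonneg (abs_nonneg _) _
  have hwp : (0:ℝ) ≤ |w| ^ p₁ := Real.rpow_nonneg (abs_nonneg _) _
  have hMh : (0:ℝ) ≤ M ^ (γ + 1) := Real.rpow_nonneg hM0 _
  have h2γ : (0:ℝ) < (2:ℝ) ^ γ := Real.rpow_pos_of_pos (by norm_num) _
  -- split
  have key : |(|w + z| ^ p₁ * A - |w| ^ p₁ * B)| ≤ |z| ^ p₁ * u y + |w| ^ p₁ * |A - B| := by
    have heq : |w + z| ^ p₁ * A - |w| ^ p₁ * B =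
        (|w + z| ^ p₁ - |w| ^ p₁) * A + |w| ^ p₁ * (A - B) := by ring
    rw [heq]
    refine (abs_add_le _ _).trans ?_
    rw [abs_mul, abs_mul, abs_of_nonneg hwp]
    have hd1 : |(|w + z| ^ p₁ - |w| ^ p₁)| ≤ |z| ^ p₁ := by
      have := myrpow_diff (w + z) w p₁ hp0.le hp1.le
      simpa using this
    have := mul_le_mul hd1 hAb (abs_nonneg A) hzp
    linarith
  -- bound T2
  have hT2 : |w| ^ p₁ * |A - B| ≤ (2 + (1 + (2:ℝ) ^ γ) * (1 + M ^ (γ + 1))) * u y * |z| ^ p₁ := by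
    rcases le_total |w| |z| with hwz | hzw
    · -- |w| ≤ |z|
      have h1 : |A - B| ≤ 2 * u y := by
        have := abs_sub A B
        linarith
      have h2 : |w| ^ p₁ ≤ |z| ^ p₁ := Real.rpow_le_rpow (abs_nonneg _) hwz hp0.le
      have h3 : |w| ^ p₁ * |A - B| ≤ |z| ^ p₁ * (2 * u y) :=
        mul_le_mul h2 h1 (abs_nonneg _) hzp
      have h4 : (0:ℝ) ≤ (1 + (2:ℝ) ^ γ) * (1 + M ^ (γ + 1)) := by positivity
      nlinarith [mul_nonneg (mul_nonneg h4 huy) hzp]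
    · -- |z| ≤ |w| : MVT
      set C := (1 + (max (|w| + |z|) ‖x‖) ^ γ) * u y with hC
      have hmvt : |A - B| ≤ C * |z| := by
        have hconv : Convex ℝ (Set.uIcc w (w + z)) := convex_uIcc _ _
        have hbd : ∀ t ∈ Set.uIcc w (w + z),
            ‖fderiv ℝ L (splice3 d l hl hld t x y)
              (Pi.single (⟨0, hd⟩ : Fin d) 1)‖ ≤ C := by
          intro t ht
          have htw : |t - w| ≤ |z| := by
            rcases Set.mem_uIcc.mp ht with ⟨h1, h2⟩ | ⟨h1, h2⟩ <;>
            · rw [abs_le]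
              constructor <;> nlinarith [le_abs_self z, neg_abs_le z]
          have htb : |t| ≤ |w| + |z| := by
            have := abs_sub_abs_le_abs_sub t w
            linarith
          have hmax : max |t| ‖x‖ ≤ max (|w| + |z|) ‖x‖ :=
            max_le_max htb le_rfl
          have hmax0 : (0:ℝ) ≤ max |t| ‖x‖ := le_trans (abs_nonneg t) (le_max_left _ _)
          have hrp : (max |t| ‖x‖) ^ γ ≤ (max (|w| + |z|) ‖x‖) ^ γ :=
            Real.rpow_le_rpow hmax0 hmax hγ
          have := hDbound t x y
          rw [Real.norm_eq_abs]
          refine le_trans this ?_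
          rw [hC]
          have : (0:ℝ) ≤ u y := huy
          nlinarith
        have := hconv.norm_image_sub_le_of_norm_hasDerivWithin_le
          (f := fun s => L (splice3 d l hl hld s x y))
          (f' := fun t => fderiv ℝ L (splice3 d l hl hld t x y)
            (Pi.single (⟨0, hd⟩ : Fin d) 1))
          (C := C)
          (fun t ht => (deriv_along d l hl hld hd L hL x y t).hasDerivWithinAt)
          hbd Set.left_mem_uIcc Set.right_mem_uIcc
        simp only [Real.norm_eq_abs, add_sub_cancel_left] at this
        exact this
      -- |w|^p₁ * |z| ≤ |w| * |z|^p₁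
      have hzz : |z| ^ p₁ * |z| ^ (1 - p₁) = |z| := by
        rw [← Real.rpow_add' (abs_nonneg z) (by norm_num)]
        simp
      have hww : |w| ^ p₁ * |w| ^ (1 - p₁) = |w| := by
        rw [← Real.rpow_add' (abs_nonneg w) (by norm_num)]
        simp
      have hzw' : |z| ^ (1 - p₁) ≤ |w| ^ (1 - p₁) :=
        Real.rpow_le_rpow (abs_nonneg _) hzw (by linarith)
      have hstep : |w| ^ p₁ * |z| ≤ |w| * |z| ^ p₁ := by
        calc |w| ^ p₁ * |z| = |w| ^ p₁ * (|z| ^ p₁ * |z| ^ (1 - p₁)) := by rw [hzz]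
        _ ≤ |w| ^ p₁ * (|z| ^ p₁ * |w| ^ (1 - p₁)) := by
            have h0 : (0:ℝ) ≤ |w| ^ p₁ := hwp
            have h1 : |z| ^ p₁ * |z| ^ (1 - p₁) ≤ |z| ^ p₁ * |w| ^ (1 - p₁) :=
              mul_le_mul_of_nonneg_left hzw' hzp
            exact mul_le_mul_of_nonneg_left h1 h0
        _ = (|w| ^ p₁ * |w| ^ (1 - p₁)) * |z| ^ p₁ := by ring
        _ = |w| * |z| ^ p₁ := by rw [hww]
      -- bound C
      have hmax2 : max (|w| + |z|) ‖x‖ ≤ 2 * M := by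
        have h1 : |w| + |z| ≤ 2 * |w| := by linarith
        have h2 : |w| ≤ M := le_max_left _ _
        have h3 : ‖x‖ ≤ M := le_max_right _ _
        have : max (|w| + |z|) ‖x‖ ≤ max (2 * M) (2 * M) :=
          max_le_max (by linarith) (by linarith)
        simpa using this
      have hmax20 : (0:ℝ) ≤ max (|w| + |z|) ‖x‖ :=
        le_trans (by positivity) (le_max_left _ _)
      have hCb : C ≤ (1 + (2:ℝ) ^ γ * M ^ γ) * u y := by
        have h1 : (max (|w| + |z|) ‖x‖) ^ γ ≤ (2 * M) ^ γ :=
          Real.rpow_le_rpow hmax20 hmax2 hγ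
        have h2 : ((2:ℝ) * M) ^ γ = (2:ℝ) ^ γ * M ^ γ :=
          Real.mul_rpow (by norm_num) hM0
        rw [hC]
        nlinarith
      -- assemble
      have hMγ : (0:ℝ) ≤ M ^ γ := Real.rpow_nonneg hM0 _
      have hMM : M * M ^ γ = M ^ (γ + 1) := by
        rw [Real.rpow_add' hM0 (by linarith)]
        rw [Real.rpow_one]
        ring
      have hwM : |w| ≤ M := le_max_left _ _
      have hMle : M ≤ 1 + M ^ (γ + 1) := M_le M γ hM0 hγ
      have hC0 : 0 ≤ C := by rw [hC]; positivity
      calc |w| ^ p₁ * |A - B| ≤ |w| ^ p₁ * (C * |z|) :=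
            mul_le_mul_of_nonneg_left hmvt hwp
      _ = C * (|w| ^ p₁ * |z|) := by ring
      _ ≤ C * (|w| * |z| ^ p₁) := mul_le_mul_of_nonneg_left hstep hC0
      _ ≤ ((1 + (2:ℝ) ^ γ * M ^ γ) * u y) * (M * |z| ^ p₁) := by
          have hwz2 : |w| * |z| ^ p₁ ≤ M * |z| ^ p₁ :=
            mul_le_mul_of_nonneg_right hwM hzp
          have h0 : (0:ℝ) ≤ |w| * |z| ^ p₁ := by positivity
          have h1 : (0:ℝ) ≤ (1 + (2:ℝ) ^ γ * M ^ γ) * u y := by positivity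
          exact mul_le_mul hCb hwz2 h0 h1
      _ = (M + (2:ℝ) ^ γ * (M * M ^ γ)) * u y * |z| ^ p₁ := by ring
      _ = (M + (2:ℝ) ^ γ * M ^ (γ + 1)) * u y * |z| ^ p₁ := by rw [hMM]
      _ ≤ (2 + (1 + (2:ℝ) ^ γ) * (1 + M ^ (γ + 1))) * u y * |z| ^ p₁ := by
          have : M + (2:ℝ) ^ γ * M ^ (γ + 1) ≤ 2 + (1 + (2:ℝ) ^ γ) * (1 + M ^ (γ + 1)) := by
            nlinarith
          nlinarith [mul_nonneg huy hzp]
  -- final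
  have hfin : |z| ^ p₁ * u y + (2 + (1 + (2:ℝ) ^ γ) * (1 + M ^ (γ + 1))) * u y * |z| ^ p₁ ≤
      3 * (1 + (2:ℝ) ^ γ) * u y * (1 + M ^ (γ + 1)) * |z| ^ p₁ := by
    have huz : (0:ℝ) ≤ u y * |z| ^ p₁ := mul_nonneg huy hzp
    have h2γ1 : (1:ℝ) ≤ (2:ℝ) ^ γ := by
      have := Real.rpow_le_rpow_of_exponent_le (by norm_num : (1:ℝ) ≤ 2) hγ
      rwa [Real.rpow_zero] at this
    have hP : (0:ℝ) ≤ 2 * ((1 + (2:ℝ) ^ γ) * (1 + M ^ (γ + 1))) - 3 := by nlinarith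
    nlinarith [mul_nonneg huz hP]
  calc abs (|w + z| ^ p₁ * A - |w| ^ p₁ * B) ≤ |z| ^ p₁ * u y + |w| ^ p₁ * |A - B| := key
  _ ≤ |z| ^ p₁ * u y + (2 + (1 + (2:ℝ) ^ γ) * (1 + M ^ (γ + 1))) * u y * |z| ^ p₁ := by
      linarith
  _ ≤ 3 * (1 + (2:ℝ) ^ γ) * u y * (1 + M ^ (γ + 1)) * |z| ^ p₁ := hfin
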